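/- Let C be a Kashiwara–Nakashima column of height r ≤ n with splitting (lC, rC) (defined via Sheats/Lecouvey splitting). For any unbarred letter x ∈ {1,…,n}, the column lC contains an element of {x, x̄} if and only if rC contains an element of {x, x̄}. -/

import Mathlib

/- Letters of the alphabet `1 < … < n < n̄ < … < 1̄` are encoded as `1, …, 2n`:
the unbarred letter `z` (`1 ≤ z ≤ n`) is `z`, and the barred letter `z̄` is `2n+1-z`. -/

/-- A column of height `r`: a strictly increasing filling with entries in the
`2n`-letter alphabet. -/
def IsColumn (n r : ℕ) (C : Fin r → ℕ) : Prop :=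
  StrictMono C ∧ ∀ p, 1 ≤ C p ∧ C p ≤ 2 * n

/-- The Kashiwara–Nakashima condition: no pair `(z, z̄)` with `z = x_p`, `z̄ = x_q`
and `q - p ≤ r - z` (positions `1`-based; here `p, q` are `0`-based). -/
def IsKN (n r : ℕ) (C : Fin r → ℕ) : Prop :=
  ¬ ∃ (z : ℕ) (p q : Fin r), 1 ≤ z ∧ z ≤ n ∧ C p = z ∧ C q = 2 * n + 1 - z ∧
    (q : ℤ) - (p : ℤ) ≤ (r : ℤ) - (z : ℤ)

/-- The set `I = {z : both z and z̄ occur in C}` of unbarred letters. -/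
def pairSet (n r : ℕ) (C : Fin r → ℕ) : Finset ℕ :=
  (Finset.Icc 1 n).filter (fun z => (∃ p, C p = z) ∧ ∃ q, C q = 2 * n + 1 - z)

/-- `I` listed decreasingly: `z_1 > z_2 > … > z_k`. -/
def zList (n r : ℕ) (C : Fin r → ℕ) : List ℕ :=
  ((pairSet n r C).sort (· ≤ ·)).reverse

/-- `ts` is a splitting sequence for `C`: `t_1` is the greatest letter `< z_1` with
`t_1, t̄_1 ∉ C`, and inductively `t_i` is the greatest letter `< min(t_{i-1}, z_i)`
with `t_i, t̄_i ∉ C`. -/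
def IsSplitting (n r : ℕ) (C : Fin r → ℕ) (ts : List ℕ) : Prop :=
  ts.length = (zList n r C).length ∧
  ∀ i < ts.length,
    IsGreatest {t : ℕ | 1 ≤ t ∧
      t < (if i = 0 then (zList n r C)[0]! else min (ts[i-1]!) ((zList n r C)[i]!)) ∧
      (∀ p, C p ≠ t) ∧ (∀ p, C p ≠ 2 * n + 1 - t)} (ts[i]!)

/-- `C` can be split. -/
def CanSplit (n r : ℕ) (C : Fin r → ℕ) : Prop :=
  ∃ ts : List ℕ, IsSplitting n r C ts

/-- The multiset of entries of `C`. -/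
def colMultiset (r : ℕ) (C : Fin r → ℕ) : Multiset ℕ :=
  (Finset.univ : Finset (Fin r)).val.map C

/-- The entries of `rC`: each `z̄_i` is replaced by `t̄_i`. -/
def rColumn (n r : ℕ) (C : Fin r → ℕ) (ts : List ℕ) : Multiset ℕ :=
  ((zList n r C).zip ts).foldl
    (fun s p => (2 * n + 1 - p.2) ::ₘ s.erase (2 * n + 1 - p.1)) (colMultiset r C)

/-- The entries of `lC`: each `z_i` is replaced by `t_i`. -/
def lColumn (n r : ℕ) (C : Fin r → ℕ) (ts : List ℕ) : Multiset ℕ :=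
  ((zList n r C).zip ts).foldl
    (fun s p => p.2 ::ₘ s.erase p.1) (colMultiset r C)

lemma cnt_erase (a b : ℕ) (S : Multiset ℕ) :
    Multiset.count a (S.erase b) = Multiset.count a S - if a = b then 1 else 0 := by
  by_cases h : a = b
  · subst h; simp [Multiset.count_erase_self]
  · simp [h, Multiset.count_erase_of_ne h]

lemma fold_eq (L : List (ℕ × ℕ)) :
    ∀ (S : Multiset ℕ), (↑(L.map Prod.fst) : Multiset ℕ) ≤ S →
    (∀ p ∈ L, ∀ q ∈ L, p.1 ≠ q.2) →
    L.foldl (fun s p => p.2 ::ₘ s.erase p.1) S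
      = ↑(L.map Prod.snd) + (S - ↑(L.map Prod.fst)) := by
  induction L with
  | nil => intro S _ _; simp
  | cons p L ih =>
    intro S hle hdisj
    have hps : p ∈ p :: L := List.mem_cons_self
    have hp12 : p.1 ≠ p.2 := hdisj p hps p hps
    simp only [List.foldl_cons, List.map_cons]
    rw [ih (p.2 ::ₘ S.erase p.1) ?hle2 ?hd2]
    case hd2 =>
      intro a ha b hb
      exact hdisj a (List.mem_cons_of_mem _ ha) b (List.mem_cons_of_mem _ hb)
    case hle2 =>
      rw [Multiset.le_iff_count] at hle ⊢
      intro a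
      have h1 := hle a
      simp only [Multiset.coe_count, List.count_cons, List.map_cons, beq_iff_eq,
        Multiset.count_cons, cnt_erase] at h1 ⊢
      split_ifs at h1 ⊢ <;> omega
    · ext a
      have hnd : List.count a (L.map Prod.fst) = 0 ∨ a ≠ p.2 := by
        by_cases h2 : a = p.2
        · left
          rw [List.count_eq_zero]
          intro ha
          obtain ⟨q, hq, hq2⟩ := List.mem_map.mp ha
          exact hdisj q (List.mem_cons_of_mem _ hq) p hps (hq2.trans h2)
        · right; exact h2
      simp only [Multiset.count_add, Multiset.count_sub, Multiset.count_cons,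
        Multiset.coe_count, List.count_cons, beq_iff_eq, cnt_erase]
      rcases hnd with hnd | hnd <;> [skip; skip] <;> split_ifs <;> omega

lemma mem_sub_of_nodup {S A : Multiset ℕ} (hS : S.Nodup) (hA : A ≤ S) (x : ℕ) :
    x ∈ S - A ↔ x ∈ S ∧ x ∉ A := by
  have h1 : Multiset.count x S ≤ 1 := Multiset.nodup_iff_count_le_one.mp hS x
  have h2 : Multiset.count x A ≤ Multiset.count x S := Multiset.le_iff_count.mp hA x
  rw [← Multiset.count_pos, Multiset.count_sub, ← Multiset.count_pos, ← Multiset.count_pos]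
  omega

/-- For a KN column `C` with splitting `(lC, rC)` and any unbarred letter `x`,
`lC` contains an element of `{x, x̄}` iff `rC` contains an element of `{x, x̄}`. -/
theorem lC_rC_pair_membership (n r : ℕ) (hr : r ≤ n) (C : Fin r → ℕ)
    (hC : IsColumn n r C) (hKN : IsKN n r C)
    (ts : List ℕ) (hts : IsSplitting n r C ts)
    (x : ℕ) (hx1 : 1 ≤ x) (hx2 : x ≤ n) :
    (x ∈ lColumn n r C ts ∨ (2 * n + 1 - x) ∈ lColumn n r C ts) ↔
      (x ∈ rColumn n r C ts ∨ (2 * n + 1 - x) ∈ rColumn n r C ts) := by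
  set Z := zList n r C with hZdef
  set S := colMultiset r C with hSdef
  set g : ℕ → ℕ := fun a => 2 * n + 1 - a with hgdef
  obtain ⟨hlen, hgrt⟩ := hts
  -- basic facts
  have hmemS : ∀ y, y ∈ S ↔ ∃ p, C p = y := by
    intro y; simp [hSdef, colMultiset, List.mem_ofFn]
  have hSnd : S.Nodup := Multiset.Nodup.map hC.1.injective Finset.univ.nodup
  have hZnd : Z.Nodup := List.nodup_reverse.mpr (Finset.sort_nodup _ _)
  have hZmem : ∀ z ∈ Z, 1 ≤ z ∧ z ≤ n ∧ (∃ p, C p = z) ∧ (∃ q, C q = 2 * n + 1 - z) := by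
    intro z hz
    rw [hZdef, zList, List.mem_reverse, Finset.mem_sort, pairSet, Finset.mem_filter,
      Finset.mem_Icc] at hz
    exact ⟨hz.1.1, hz.1.2, hz.2.1, hz.2.2⟩
  have hxZ : x ∈ Z ↔ x ∈ S ∧ (2 * n + 1 - x) ∈ S := by
    rw [hZdef, zList, List.mem_reverse, Finset.mem_sort, pairSet, Finset.mem_filter,
      Finset.mem_Icc, hmemS, hmemS]
    constructor
    · rintro ⟨_, h⟩; exact h
    · rintro h; exact ⟨⟨hx1, hx2⟩, h⟩
  -- facts about ts
  have htsmem : ∀ t ∈ ts, 1 ≤ t ∧ t ≤ n ∧ (∀ p, C p ≠ t) ∧ (∀ p, C p ≠ 2 * n + 1 - t) := by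
    intro t ht
    obtain ⟨i, hi, rfl⟩ := List.mem_iff_getElem.mp ht
    have h1 := (hgrt i hi).1
    obtain ⟨h11, h12, h13, h14⟩ := h1
    rw [getElem!_pos ts i hi] at h11 h12 h13 h14
    have hiZ : i < Z.length := hlen ▸ hi
    have hzi : Z[i] ∈ Z := List.getElem_mem hiZ
    have hzib := (hZmem _ hzi).2.1
    have htz : ts[i] < Z[i] := by
      rw [← getElem!_pos Z i hiZ]
      by_cases h0 : i = 0
      · subst h0; simpa using h12
      · simp only [if_neg h0] at h12
        exact lt_of_lt_of_le h12 (min_le_right _ _)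
    exact ⟨h11, le_trans (le_of_lt htz) hzib, h13, h14⟩
  -- key multiset identities
  set L := Z.zip ts with hLdef
  have hmfst : L.map Prod.fst = Z := List.map_fst_zip (le_of_eq hlen.symm)
  have hmsnd : L.map Prod.snd = ts := List.map_snd_zip (le_of_eq hlen)
  have hcomp : ∀ p ∈ L, p.1 ∈ Z ∧ p.2 ∈ ts := by
    intro p hp
    exact List.of_mem_zip (show (p.1, p.2) ∈ Z.zip ts from by simpa using hp)
  have hleZ : (↑Z : Multiset ℕ) ≤ S := by
    rw [Multiset.le_iff_count]
    intro a
    by_cases ha : a ∈ Z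
    · have h1 : List.count a Z ≤ 1 := List.nodup_iff_count_le_one.mp hZnd a
      have h2 : a ∈ S := (hmemS a).mpr (hZmem a ha).2.2.1
      rw [← Multiset.count_pos] at h2
      rw [Multiset.coe_count]; omega
    · rw [Multiset.coe_count, List.count_eq_zero_of_not_mem ha]; omega
  have hdisjL : ∀ p ∈ L, ∀ q ∈ L, p.1 ≠ q.2 := by
    intro p hp q hq heq
    obtain ⟨pC, hpC⟩ := (hZmem _ (hcomp p hp).1).2.2.1
    exact (htsmem _ (hcomp q hq).2).2.2.1 pC (heq ▸ hpC)
  have hlC : lColumn n r C ts = ↑ts + (S - ↑Z) := by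
    rw [lColumn]
    rw [show (zList n r C).zip ts = L from rfl]
    rw [fold_eq L S (hmfst ▸ hleZ) hdisjL, hmfst, hmsnd]
  -- rColumn
  have hginj : ∀ a b : ℕ, 1 ≤ a → a ≤ n → 1 ≤ b → b ≤ n → g a = g b → a = b := by
    intro a b h1 h2 h3 h4 h5
    simp only [hgdef] at h5; omega
  have hZgnd : (Z.map g).Nodup := by
    apply List.Nodup.map_on _ hZnd
    intro u hu v hv huv
    exact hginj u v (hZmem u hu).1 (hZmem u hu).2.1 (hZmem v hv).1 (hZmem v hv).2.1 huv
  have hleZg : (↑(Z.map g) : Multiset ℕ) ≤ S := by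
    rw [Multiset.le_iff_count]
    intro a
    by_cases ha : a ∈ Z.map g
    · have h1 : List.count a (Z.map g) ≤ 1 := List.nodup_iff_count_le_one.mp hZgnd a
      obtain ⟨z, hz, rfl⟩ := List.mem_map.mp ha
      have h2 : g z ∈ S := (hmemS _).mpr (hZmem z hz).2.2.2
      rw [← Multiset.count_pos] at h2
      rw [Multiset.coe_count]; omega
    · rw [Multiset.coe_count, List.count_eq_zero_of_not_mem ha]; omega
  set L' := L.map (fun p => (g p.1, g p.2)) with hL'def
  have hrC : rColumn n r C ts = ↑(ts.map g) + (S - ↑(Z.map g)) := by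
    have h0 : rColumn n r C ts = L'.foldl (fun s p => p.2 ::ₘ s.erase p.1) S := by
      rw [hL'def, List.foldl_map]
      rfl
    have hfst' : L'.map Prod.fst = Z.map g := by
      rw [hL'def, List.map_map, ← hmfst, List.map_map]; rfl
    have hsnd' : L'.map Prod.snd = ts.map g := by
      rw [hL'def, List.map_map, ← hmsnd, List.map_map]; rfl
    have hle' := hleZg
    have hdisj' : ∀ p ∈ L', ∀ q ∈ L', p.1 ≠ q.2 := by
      intro p hp q hq heq
      obtain ⟨p0, hp0, rfl⟩ := List.mem_map.mp hp
      obtain ⟨q0, hq0, rfl⟩ := List.mem_map.mp hq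
      simp only at heq
      have hz := hZmem _ (hcomp p0 hp0).1
      have ht := htsmem _ (hcomp q0 hq0).2
      have : p0.1 = q0.2 := hginj _ _ hz.1 hz.2.1 ht.1 ht.2.1 heq
      obtain ⟨pC, hpC⟩ := hz.2.2.1
      exact ht.2.2.1 pC (this ▸ hpC)
    rw [h0, fold_eq L' S (hfst' ▸ hle') hdisj', hfst', hsnd']
  -- membership translations
  have hxbar_ge : n + 1 ≤ 2 * n + 1 - x := by omega
  have hxbar_notin_ts : (2 * n + 1 - x) ∉ ts := fun h => by
    have := (htsmem _ h).2.1; omega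
  have hxbar_notin_Z : (2 * n + 1 - x) ∉ Z := fun h => by
    have := (hZmem _ h).2.1; omega
  have hx_notin_tsg : x ∉ ts.map g := by
    intro h
    obtain ⟨t, ht, htg⟩ := List.mem_map.mp h
    have h1 := (htsmem _ ht).1
    have h2 := (htsmem _ ht).2.1
    simp only [hgdef] at htg; omega
  have hx_notin_Zg : x ∉ Z.map g := by
    intro h
    obtain ⟨z, hz, hzg⟩ := List.mem_map.mp h
    have h1 := (hZmem _ hz).1
    have h2 := (hZmem _ hz).2.1
    simp only [hgdef] at hzg; omega
  have hxbar_tsg : (2 * n + 1 - x) ∈ ts.map g ↔ x ∈ ts := by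
    constructor
    · intro h
      obtain ⟨t, ht, htg⟩ := List.mem_map.mp h
      have h1 := (htsmem _ ht).1
      have h2 := (htsmem _ ht).2.1
      have : t = x := by simp only [hgdef] at htg; omega
      exact this ▸ ht
    · intro h; exact List.mem_map.mpr ⟨x, h, rfl⟩
  have hxbar_Zg : (2 * n + 1 - x) ∈ Z.map g ↔ x ∈ Z := by
    constructor
    · intro h
      obtain ⟨z, hz, hzg⟩ := List.mem_map.mp h
      have h1 := (hZmem _ hz).1
      have h2 := (hZmem _ hz).2.1
      have : z = x := by simp only [hgdef] at hzg; omega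
      exact this ▸ hz
    · intro h; exact List.mem_map.mpr ⟨x, h, rfl⟩
  -- assemble
  rw [hlC, hrC]
  simp only [Multiset.mem_add, Multiset.mem_coe,
    mem_sub_of_nodup hSnd hleZ, mem_sub_of_nodup hSnd hleZg]
  tauto
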